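/- Let ρ ∈ (0,1), ν ≥ 0, σ > 0, SNR > 0, δ ∈ [0,1], and let N, K, i be positive integers with i ≤ K. Set α = 1/(1+ν), A = (1−ρ)(1+ν)/N, and B′ = 1/SNR + (1−ρ)·(ν/(1+ν))·K σ²/N. Then ∫_ℝ φ(μ; 0, ρ/N) ∫_ℝ ∫_ℝ φ(z₂; (K−i)μ, (K−i)A) · ( ∫_ℝ φ(z₁; iμ, iA) · φ( y − ασ(z₁ + z₂) − (1−α)σKμ; 0, B′ )^{1/(1+δ)} dz₁ )^{1+δ} dz₂ dy dμ = ( 1 + ((1−ρ)/(1+ν))·i σ²·SNR / (N(1+δ)·ξ) )^{−δ/2}, where ξ = SNR·B′ = 1 + ((1−ρ)ν/(1+ν))·K·SNR·σ²/N. (If K = i, the z₂ integral against φ(z₂; 0, 0) is interpreted as evaluation at z₂ = 0.) -/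

import Mathlib

open MeasureTheory Real
noncomputable section

/-- Density of the real Gaussian distribution `N(m, v)` with mean `m` and variance `v`. -/
def gauss (x m v : ℝ) : ℝ := (2 * Real.pi * v) ^ (-(1:ℝ)/2) * Real.exp (-(x - m)^2 / (2*v))

lemma gauss_nonneg (x m : ℝ) {v : ℝ} (hv : 0 < v) : 0 ≤ gauss x m v := by
  unfold gauss; have := Real.pi_pos; positivity

lemma integral_gauss (m : ℝ) {v : ℝ} (hv : 0 < v) : ∫ x : ℝ, gauss x m v = 1 := by
  unfold gauss
  have hπ := Real.pi_pos
  rw [integral_const_mul]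
  have h1 : ∀ x : ℝ, Real.exp (-(x - m)^2 / (2*v)) = Real.exp (-(2*v)⁻¹ * (x - m)^2) := by
    intro x; congr 1; field_simp
  simp_rw [h1]
  rw [integral_sub_right_eq_self (fun x => Real.exp (-(2*v)⁻¹ * x^2)) m]
  rw [integral_gaussian]
  rw [show π / (2*v)⁻¹ = 2*π*v by field_simp, Real.sqrt_eq_rpow,
    ← Real.rpow_add (by positivity)]
  norm_num

lemma gauss_mul_gauss (z a y : ℝ) {v₁ v₂ : ℝ} (hv₁ : 0 < v₁) (hv₂ : 0 < v₂) :
    gauss z a v₁ * gauss (y - z) 0 v₂ =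
      gauss y a (v₁ + v₂) * gauss z ((a*v₂ + y*v₁)/(v₁+v₂)) (v₁*v₂/(v₁+v₂)) := by
  have hπ := Real.pi_pos
  have h12 : 0 < v₁ + v₂ := by linarith
  unfold gauss
  rw [mul_mul_mul_comm, mul_mul_mul_comm ((2 * π * (v₁ + v₂)) ^ (-(1:ℝ)/2)),
    ← Real.exp_add, ← Real.exp_add,
    ← Real.mul_rpow (by positivity) (by positivity),
    ← Real.mul_rpow (by positivity) (by positivity)]
  congr 2
  · field_simp
  · field_simp; ring

lemma conv0 (a y : ℝ) {v₁ v₂ : ℝ} (hv₁ : 0 < v₁) (hv₂ : 0 < v₂) :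
    ∫ z : ℝ, gauss z a v₁ * gauss (y - z) 0 v₂ = gauss y a (v₁ + v₂) := by
  have h12 : 0 < v₁ + v₂ := by linarith
  simp_rw [fun z => gauss_mul_gauss z a y hv₁ hv₂]
  rw [integral_const_mul, integral_gauss _ (by positivity), mul_one]

lemma gauss_scale (z a : ℝ) {v c : ℝ} (hv : 0 < v) (hc : 0 < c) :
    gauss z a v = c * gauss (c*z) (c*a) (c^2*v) := by
  have hπ := Real.pi_pos
  have h2 : ((2*π*(c^2*v)) : ℝ)^(-(1:ℝ)/2) = c⁻¹ * (2*π*v)^(-(1:ℝ)/2) := by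
    rw [show (2*π*(c^2*v)) = c^2 * (2*π*v) by ring,
      Real.mul_rpow (by positivity) (by positivity),
      ← Real.rpow_natCast c 2, ← Real.rpow_mul hc.le, ← Real.rpow_neg_one c]
    norm_num
  unfold gauss
  rw [h2, show -(c*z - c*a)^2 / (2*(c^2*v)) = -(z-a)^2/(2*v) by field_simp]
  field_simp

lemma conv (a d y : ℝ) {v₁ v₂ c : ℝ} (hv₁ : 0 < v₁) (hv₂ : 0 < v₂) (hc : 0 < c) :
    ∫ z : ℝ, gauss z a v₁ * gauss (y - c*z - d) 0 v₂ = gauss y (c*a + d) (c^2*v₁ + v₂) := by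
  have h1 : ∀ z : ℝ, gauss z a v₁ * gauss (y - c*z - d) 0 v₂ =
      c * (gauss (c*z) (c*a) (c^2*v₁) * gauss ((y-d) - c*z) 0 v₂) := by
    intro z
    rw [gauss_scale z a hv₁ hc]
    ring_nf
  simp_rw [h1]
  rw [integral_const_mul,
    MeasureTheory.Measure.integral_comp_mul_left
      (fun w => gauss w (c*a) (c^2*v₁) * gauss ((y-d) - w) 0 v₂) c,
    conv0 _ _ (by positivity) hv₂, smul_eq_mul, abs_of_pos (by positivity),
    ← mul_assoc, mul_inv_cancel₀ (ne_of_gt hc), one_mul]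
  unfold gauss
  ring_nf

lemma gauss_rpow (x m : ℝ) {v p : ℝ} (hv : 0 < v) (hp : 0 < p) :
    gauss x m v ^ p = ((2*Real.pi*v) ^ (-p/2) * (2*Real.pi*(v/p)) ^ ((1:ℝ)/2)) *
      gauss x m (v/p) := by
  have hπ := Real.pi_pos
  have e1 : ((2*π*v) ^ (-(1:ℝ)/2)) ^ p = (2*π*v) ^ (-p/2) := by
    rw [← Real.rpow_mul (by positivity), show (-(1:ℝ)/2)*p = -p/2 by ring]
  have e2 : Real.exp (-(x-m)^2/(2*v)) ^ p = Real.exp (-(x-m)^2/(2*(v/p))) := by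
    rw [← Real.exp_mul]
    congr 1
    field_simp
  have e3 : (2*π*(v/p)) ^ ((1:ℝ)/2) * (2*π*(v/p)) ^ (-(1:ℝ)/2) = 1 := by
    rw [← Real.rpow_add (by positivity)]
    norm_num
  unfold gauss
  rw [Real.mul_rpow (by positivity) (Real.exp_nonneg _), e1, e2,
    show ((2*π*v)^(-p/2) * (2*π*(v/p))^((1:ℝ)/2)) * ((2*π*(v/p))^(-(1:ℝ)/2) *
        Real.exp (-(x-m)^2/(2*(v/p)))) =
      (2*π*v)^(-p/2) * Real.exp (-(x-m)^2/(2*(v/p))) *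
        ((2*π*(v/p))^((1:ℝ)/2) * (2*π*(v/p))^(-(1:ℝ)/2)) from by ring, e3, mul_one]

lemma gauss_center (x m v : ℝ) : gauss x m v = gauss (x - m) 0 v := by
  unfold gauss; ring_nf

/-- The inner (`z₁`-integral) factor raised to the power `1 + δ`. -/
def inner16 (ρ σ δ α A B' : ℝ) (N K i : ℕ) (μ y z₂ : ℝ) : ℝ :=
  (∫ z₁ : ℝ, gauss z₁ (i*μ) (i*A) *
    gauss (y - α*σ*(z₁+z₂) - (1-α)*σ*K*μ) 0 B' ^ ((1:ℝ)/(1+δ))) ^ (1+δ)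

theorem statement16 (ρ ν σ SNR δ α A B' ξ : ℝ) (hρ : ρ ∈ Set.Ioo (0:ℝ) 1)
    (hν : 0 ≤ ν) (hσ : 0 < σ) (hSNR : 0 < SNR) (hδ : δ ∈ Set.Icc (0:ℝ) 1)
    (N K i : ℕ) (hN : 1 ≤ N) (hK : 1 ≤ K) (hi1 : 1 ≤ i) (hiK : i ≤ K)
    (hα : α = 1/(1+ν)) (hA : A = (1-ρ)*(1+ν)/N)
    (hB : B' = 1/SNR + (1-ρ)*(ν/(1+ν))*K*σ^2/N) (hξ : ξ = SNR * B') :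
    (∫ μ : ℝ, gauss μ 0 (ρ/N) * ∫ y : ℝ,
      (if i < K then
        ∫ z₂ : ℝ, gauss z₂ (((K - i : ℕ)) * μ) (((K - i : ℕ)) * A) *
          inner16 ρ σ δ α A B' N K i μ y z₂
      else inner16 ρ σ δ α A B' N K i μ y 0)) =
    (1 + ((1-ρ)/(1+ν)) * i * σ^2 * SNR / (N * (1+δ) * ξ)) ^ (-δ/2) := by
  obtain ⟨hρ0, hρ1⟩ := hρ
  obtain ⟨hδ0, hδ1⟩ := hδ
  have hπ := Real.pi_pos
  have hp : (0:ℝ) < 1+δ := by linarith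
  have h1ν : (0:ℝ) < 1+ν := by linarith
  have hN1 : (1:ℝ) ≤ N := by exact_mod_cast hN
  have hNpos : (0:ℝ) < N := by linarith
  have hApos : 0 < A := by
    rw [hA]; exact div_pos (mul_pos (by linarith) h1ν) hNpos
  have hB'pos : 0 < B' := by
    rw [hB]
    have h2 : (0:ℝ) ≤ (1-ρ)*(ν/(1+ν))*K*σ^2/N := by
      apply div_nonneg _ hNpos.le
      apply mul_nonneg _ (sq_nonneg σ)
      apply mul_nonneg _ (Nat.cast_nonneg K)
      exact mul_nonneg (by linarith) (div_nonneg hν h1ν.le)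
    have h3 : (0:ℝ) < 1/SNR := by positivity
    linarith
  have hαpos : 0 < α := by rw [hα]; positivity
  have hασ : 0 < α*σ := mul_pos hαpos hσ
  have hi : (1:ℝ) ≤ (i:ℝ) := by exact_mod_cast hi1
  have hiA : 0 < (i:ℝ)*A := mul_pos (by linarith) hApos
  have hB₁ : 0 < (B'*(1+δ)) := mul_pos hB'pos hp
  have hVpos : 0 < ((α*σ)^2*((i:ℝ)*A) + (B'*(1+δ))) := by
    have := mul_pos (pow_pos hασ 2) hiA
    linarith
  have hV₂ : 0 < (((α*σ)^2*((i:ℝ)*A) + (B'*(1+δ)))/(1+δ)) := div_pos hVpos hp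
  have hC₁nn : (0:ℝ) ≤ ((2*Real.pi*B') ^ (-((1:ℝ)/(1+δ))/2) * (2*Real.pi*(B'*(1+δ))) ^ ((1:ℝ)/2)) := by positivity
  -- Step 1: evaluate inner16
  have inner_eq : ∀ μ y z₂ : ℝ, inner16 ρ σ δ α A B' N K i μ y z₂ =
      (((2*Real.pi*B') ^ (-((1:ℝ)/(1+δ))/2) * (2*Real.pi*(B'*(1+δ))) ^ ((1:ℝ)/2)) ^ (1+δ) * ((2*Real.pi*((α*σ)^2*((i:ℝ)*A) + (B'*(1+δ)))) ^ (-(1+δ)/2) * (2*Real.pi*(((α*σ)^2*((i:ℝ)*A) + (B'*(1+δ)))/(1+δ))) ^ ((1:ℝ)/2))) * gauss y (α*σ*((i:ℝ)*μ) + (α*σ*z₂ + (1-α)*σ*(K:ℝ)*μ)) (((α*σ)^2*((i:ℝ)*A) + (B'*(1+δ)))/(1+δ)) := by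
    intro μ y z₂
    unfold inner16
    have h2 : ∀ z₁ : ℝ, gauss z₁ (i*μ) (i*A) *
        gauss (y - α*σ*(z₁+z₂) - (1-α)*σ*K*μ) 0 B' ^ ((1:ℝ)/(1+δ)) =
        ((2*Real.pi*B') ^ (-((1:ℝ)/(1+δ))/2) * (2*Real.pi*(B'*(1+δ))) ^ ((1:ℝ)/2)) * (gauss z₁ ((i:ℝ)*μ) ((i:ℝ)*A) *
          gauss (y - (α*σ)*z₁ - (α*σ*z₂ + (1-α)*σ*(K:ℝ)*μ)) 0 (B'*(1+δ))) := by
      intro z₁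
      rw [gauss_rpow _ _ hB'pos (by positivity : (0:ℝ) < (1:ℝ)/(1+δ)),
        show B'/((1:ℝ)/(1+δ)) = (B'*(1+δ)) by field_simp,
        show y - α*σ*(z₁+z₂) - (1-α)*σ*(K:ℝ)*μ
           = y - (α*σ)*z₁ - (α*σ*z₂ + (1-α)*σ*(K:ℝ)*μ) by ring]
      ring
    simp_rw [h2]
    rw [integral_const_mul, conv _ _ _ hiA hB₁ hασ,
      Real.mul_rpow hC₁nn (gauss_nonneg _ _ hVpos),
      gauss_rpow _ _ hVpos hp]
    ring
  -- Step 2: the y-integral is the constant C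
  have hy_eq : ∀ μ : ℝ, (∫ y : ℝ,
      (if i < K then
        ∫ z₂ : ℝ, gauss z₂ (((K - i : ℕ)) * μ) (((K - i : ℕ)) * A) *
          inner16 ρ σ δ α A B' N K i μ y z₂
      else inner16 ρ σ δ α A B' N K i μ y 0)) = (((2*Real.pi*B') ^ (-((1:ℝ)/(1+δ))/2) * (2*Real.pi*(B'*(1+δ))) ^ ((1:ℝ)/2)) ^ (1+δ) * ((2*Real.pi*((α*σ)^2*((i:ℝ)*A) + (B'*(1+δ)))) ^ (-(1+δ)/2) * (2*Real.pi*(((α*σ)^2*((i:ℝ)*A) + (B'*(1+δ)))/(1+δ))) ^ ((1:ℝ)/2))) := by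
    intro μ
    by_cases hik : i < K
    · simp only [if_pos hik]
      have hk1 : (1:ℝ) ≤ ((K - i : ℕ):ℝ) := by
        have : 1 ≤ K - i := Nat.le_sub_of_add_le (by omega)
        exact_mod_cast this
      have hkA : 0 < ((K - i : ℕ):ℝ)*A := mul_pos (by linarith) hApos
      have h3 : ∀ y z₂ : ℝ, gauss z₂ (((K - i : ℕ)) * μ) (((K - i : ℕ)) * A) *
          inner16 ρ σ δ α A B' N K i μ y z₂ =
          (((2*Real.pi*B') ^ (-((1:ℝ)/(1+δ))/2) * (2*Real.pi*(B'*(1+δ))) ^ ((1:ℝ)/2)) ^ (1+δ) * ((2*Real.pi*((α*σ)^2*((i:ℝ)*A) + (B'*(1+δ)))) ^ (-(1+δ)/2) * (2*Real.pi*(((α*σ)^2*((i:ℝ)*A) + (B'*(1+δ)))/(1+δ))) ^ ((1:ℝ)/2))) * (gauss z₂ (((K - i : ℕ):ℝ) * μ) (((K - i : ℕ):ℝ) * A) *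
            gauss (y - (α*σ)*z₂ - (α*σ*((i:ℝ)*μ) + (1-α)*σ*(K:ℝ)*μ)) 0 (((α*σ)^2*((i:ℝ)*A) + (B'*(1+δ)))/(1+δ))) := by
        intro y z₂
        rw [inner_eq μ y z₂, gauss_center y _ (((α*σ)^2*((i:ℝ)*A) + (B'*(1+δ)))/(1+δ)),
          show y - (α*σ*((i:ℝ)*μ) + (α*σ*z₂ + (1-α)*σ*(K:ℝ)*μ))
             = y - (α*σ)*z₂ - (α*σ*((i:ℝ)*μ) + (1-α)*σ*(K:ℝ)*μ) by ring]
        ring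
      simp_rw [h3, integral_const_mul]
      have h5 : ∀ y : ℝ, (∫ z₂ : ℝ, gauss z₂ (((K - i : ℕ):ℝ) * μ) (((K - i : ℕ):ℝ) * A) *
          gauss (y - (α*σ)*z₂ - (α*σ*((i:ℝ)*μ) + (1-α)*σ*(K:ℝ)*μ)) 0 (((α*σ)^2*((i:ℝ)*A) + (B'*(1+δ)))/(1+δ))) =
          gauss y ((α*σ)*(((K - i : ℕ):ℝ) * μ) + (α*σ*((i:ℝ)*μ) + (1-α)*σ*(K:ℝ)*μ))
            ((α*σ)^2*(((K - i : ℕ):ℝ) * A) + (((α*σ)^2*((i:ℝ)*A) + (B'*(1+δ)))/(1+δ))) := fun y => conv _ _ _ hkA hV₂ hασ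
      simp_rw [h5]
      rw [integral_gauss _ (by positivity), mul_one]
    · simp only [if_neg hik]
      simp_rw [inner_eq μ _ 0]
      rw [integral_const_mul, integral_gauss _ hV₂, mul_one]
  simp_rw [hy_eq]
  rw [integral_mul_const, integral_gauss _ (by positivity : (0:ℝ) < ρ/N), one_mul]
  -- Step 3: identify the constant
  have hξpos : 0 < ξ := by rw [hξ]; exact mul_pos hSNR hB'pos
  have hrhs : 1 + ((1-ρ)/(1+ν)) * i * σ^2 * SNR / (N * (1+δ) * ξ) = ((α*σ)^2*((i:ℝ)*A) + (B'*(1+δ)))/(B'*(1+δ)) := by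
    rw [hξ, hα, hA]
    field_simp
    ring
  rw [hrhs]
  have l2πB : (0:ℝ) < 2*Real.pi*B' := by positivity
  have l2πB₁ : (0:ℝ) < 2*Real.pi*(B'*(1+δ)) := by positivity
  have l2πV : (0:ℝ) < 2*Real.pi*((α*σ)^2*((i:ℝ)*A) + (B'*(1+δ))) := by positivity
  have l2πV₂ : (0:ℝ) < 2*Real.pi*(((α*σ)^2*((i:ℝ)*A) + (B'*(1+δ)))/(1+δ)) := by positivity
  have lVB : (0:ℝ) < ((α*σ)^2*((i:ℝ)*A) + (B'*(1+δ)))/(B'*(1+δ)) := div_pos hVpos hB₁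
  rw [Real.rpow_def_of_pos l2πB, Real.rpow_def_of_pos l2πB₁,
    Real.rpow_def_of_pos l2πV, Real.rpow_def_of_pos l2πV₂,
    Real.rpow_def_of_pos lVB,
    ← Real.exp_add, ← Real.exp_mul, ← Real.exp_add, ← Real.exp_add,
    Real.exp_eq_exp,
    Real.log_div hVpos.ne' hB₁.ne',
    Real.log_mul (by positivity) hB'pos.ne',
    Real.log_mul (by positivity) hB₁.ne',
    Real.log_mul (by positivity) hVpos.ne',
    Real.log_mul (by positivity) hV₂.ne',
    Real.log_mul hB'pos.ne' hp.ne',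
    Real.log_div hVpos.ne' hp.ne']
  field_simp
  ring
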